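/- Adiabatic theorem on a decaying spectral block: under the spectral hypotheses on B, assume M ≥ 1 satisfies ‖exp(tB)‖ ≤ M for all t ≥ 0, and fix an index ℓ with Re(b_ℓ) < 0. Let d be such that N_ℓ^d = 0 and set p_ℓ(s) = Σ_{k=0}^{d−1} (s^k/k!)·‖N_ℓ^k P_ℓ‖. Then for every γ > 0 and every t ≥ 0: ‖exp(t(γB + C))·P_ℓ − exp(tγB)·P_ℓ‖ ≤ (1/γ) · M·‖C‖·e^{t·M·‖C‖} · ∫₀^∞ e^{s·Re(b_ℓ)} p_ℓ(s) ds. -/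

import Mathlib

attribute [local instance] Matrix.linftyOpNormedRing Matrix.linftyOpNormedAlgebra

open NormedSpace Finset

noncomputable section

section Helpers

open intervalIntegral MeasureTheory

variable {𝔸 : Type*} [NormedRing 𝔸] [NormedAlgebra ℝ 𝔸] [CompleteSpace 𝔸]

set_option linter.unusedSectionVars false

theorem my_duhamel (A₁ A₂ : 𝔸) (t : ℝ) :
    exp (t • A₂) - exp (t • A₁)
      = ∫ s in (0:ℝ)..t, exp ((t - s) • A₂) * ((A₂ - A₁) * exp (s • A₁)) := by
  letI : NormedAlgebra ℚ 𝔸 := NormedAlgebra.restrictScalars ℚ ℝ 𝔸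
  have hcont : ∀ X : 𝔸, Continuous fun s : ℝ => exp (s • X) := fun X =>
    exp_continuous.comp (continuous_id.smul continuous_const)
  have hderiv : ∀ s : ℝ, HasDerivAt (fun s : ℝ => exp ((t - s) • A₂) * exp (s • A₁))
      (exp ((t - s) • A₂) * ((A₁ - A₂) * exp (s • A₁))) s := by
    intro s
    have h1 : HasDerivAt (fun s : ℝ => exp ((t - s) • A₂))
        ((-1 : ℝ) • (A₂ * exp ((t - s) • A₂))) s := by
      have := (hasDerivAt_exp_smul_const' (𝕂 := ℝ) A₂ (t - s))
      exact this.scomp s ((hasDerivAt_id s).const_sub t)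
    have h2 : HasDerivAt (fun s : ℝ => exp (s • A₁)) (A₁ * exp (s • A₁)) s := by
      simpa using (hasDerivAt_exp_smul_const' (𝕂 := ℝ) A₁ s)
    have h3 := h1.mul h2
    convert h3 using 1
    · rfl
    have hc : A₂ * exp ((t - s) • A₂) = exp ((t - s) • A₂) * A₂ :=
      (((Commute.refl A₂).smul_right (t - s)).exp_right).eq
    rw [neg_one_smul, hc]
    noncomm_ring
  have hint : IntervalIntegrable
      (fun s : ℝ => exp ((t - s) • A₂) * ((A₁ - A₂) * exp (s • A₁))) volume 0 t := by
    apply Continuous.intervalIntegrable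
    exact ((exp_continuous.comp ((continuous_const.sub continuous_id).smul
      continuous_const)).mul (continuous_const.mul (hcont A₁)))
  have := intervalIntegral.integral_eq_sub_of_hasDerivAt (fun s _ => hderiv s) hint
  simp only [sub_self, sub_zero, zero_smul, exp_zero, one_mul, mul_one] at this
  have h4 : ∀ s : ℝ, exp ((t - s) • A₂) * ((A₂ - A₁) * exp (s • A₁))
      = -(exp ((t - s) • A₂) * ((A₁ - A₂) * exp (s • A₁))) := by
    intro s; rw [← neg_sub A₂ A₁]; noncomm_ring
  simp only [h4]
  rw [intervalIntegral.integral_neg, this]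
  abel

theorem my_growth (A D : 𝔸) (M : ℝ) (hM : 1 ≤ M)
    (hA : ∀ u : ℝ, 0 ≤ u → ‖exp (u • A)‖ ≤ M) :
    ∀ t : ℝ, 0 ≤ t → ‖exp (t • (A + D))‖ ≤ M * Real.exp (t * (M * ‖D‖)) := by
  intro t ht
  letI : NormedAlgebra ℚ 𝔸 := NormedAlgebra.restrictScalars ℚ ℝ 𝔸
  by_cases hD : ‖D‖ = 0
  · rw [norm_eq_zero] at hD
    subst hD
    simp only [norm_zero, mul_zero, Real.exp_zero, mul_one, add_zero]
    exact (hA t ht).trans (le_of_eq (by ring))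
  have hDpos : 0 < ‖D‖ := lt_of_le_of_ne (norm_nonneg D) (Ne.symm hD)
  set K : ℝ := M * ‖D‖ with hKdef
  have hK : 0 < K := mul_pos (lt_of_lt_of_le one_pos hM) hDpos
  set g : ℝ → ℝ := fun s => ‖exp (s • (A + D))‖ with hgdef
  have hgc : Continuous g :=
    (exp_continuous.comp (continuous_id.smul continuous_const)).norm
  have hgnn : ∀ s, 0 ≤ g s := fun s => norm_nonneg _
  set F : ℝ → ℝ := fun u => ∫ s in (0:ℝ)..u, g s with hFdef
  have hF : ∀ u : ℝ, HasDerivAt F (g u) u := fun u =>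
    (hgc.integral_hasStrictDerivAt 0 u).hasDerivAt
  have hFnn : ∀ u : ℝ, 0 ≤ u → 0 ≤ F u := fun u hu =>
    intervalIntegral.integral_nonneg hu fun s _ => hgnn s
  have key : ∀ u : ℝ, 0 ≤ u → g u ≤ M + K * F u := by
    intro u hu
    have hduh := my_duhamel (A + D) A u
    have heq : exp (u • (A + D)) = exp (u • A) -
        ∫ s in (0:ℝ)..u, exp ((u - s) • A) * ((A - (A + D)) * exp (s • (A + D))) := by
      rw [← hduh]; abel
    have hnormint : ‖∫ s in (0:ℝ)..u,
          exp ((u - s) • A) * ((A - (A + D)) * exp (s • (A + D)))‖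
        ≤ ∫ s in (0:ℝ)..u, K * g s := by
      refine (intervalIntegral.norm_integral_le_integral_norm hu).trans ?_
      refine intervalIntegral.integral_mono_on hu ?_ ?_ ?_
      · apply Continuous.intervalIntegrable
        exact ((exp_continuous.comp ((continuous_const.sub continuous_id).smul
          continuous_const)).mul (continuous_const.mul
          (exp_continuous.comp (continuous_id.smul continuous_const)))).norm
      · exact (continuous_const.mul hgc).intervalIntegrable _ _
      · intro s hs
        have h1 : ‖exp ((u - s) • A)‖ ≤ M := hA _ (by linarith [hs.2])
        calc ‖exp ((u - s) • A) * ((A - (A + D)) * exp (s • (A + D)))‖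
            ≤ ‖exp ((u - s) • A)‖ * (‖A - (A + D)‖ * ‖exp (s • (A + D))‖) :=
              (norm_mul_le _ _).trans (by gcongr; exact norm_mul_le _ _)
          _ ≤ M * (‖D‖ * g s) := by
              have : ‖A - (A + D)‖ = ‖D‖ := by rw [show A - (A + D) = -D by abel, norm_neg]
              rw [this]; gcongr
          _ = K * g s := by rw [hKdef]; ring
    have hKF : (∫ s in (0:ℝ)..u, K * g s) = K * F u := by
      rw [hFdef]; exact intervalIntegral.integral_const_mul K g
    calc g u ≤ ‖exp (u • A)‖ + ‖∫ s in (0:ℝ)..u,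
          exp ((u - s) • A) * ((A - (A + D)) * exp (s • (A + D)))‖ := by
          rw [hgdef]; simp only; rw [heq]; exact norm_sub_le _ _
      _ ≤ M + K * F u := by rw [← hKF]; exact add_le_add (hA u hu) hnormint
  have hgron := norm_le_gronwallBound_of_norm_deriv_right_le (f := F) (f' := g)
    (δ := 0) (K := K) (ε := M) (a := 0) (b := t)
    (fun x _ => (hF x).continuousAt.continuousWithinAt)
    (fun x _ => (hF x).hasDerivWithinAt)
    (by simp [hFdef])
    (fun x hx => by
      rw [Real.norm_of_nonneg (hgnn x), Real.norm_of_nonneg (hFnn x hx.1)]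
      linarith [key x hx.1])
  have hFt := hgron t ⟨ht, le_refl t⟩
  rw [Real.norm_of_nonneg (hFnn t ht), sub_zero, gronwallBound_of_K_ne_0 hK.ne'] at hFt
  have := key t ht
  have hexp : (0:ℝ) < Real.exp (K * t) := Real.exp_pos _
  calc ‖exp (t • (A + D))‖ = g t := rfl
    _ ≤ M + K * F t := key t ht
    _ ≤ M + K * (0 * Real.exp (K * t) + M / K * (Real.exp (K * t) - 1)) := by
        have := hFt; nlinarith [hK]
    _ = M * Real.exp (t * K) := by field_simp; ring

theorem my_pow_proj (A E p : 𝔸) (hp : p * p = p) (hAp : A * p = E * p)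
    (hE : E * p = p * E) : ∀ k : ℕ, A ^ k * p = E ^ k * p := by
  have hkey : E * p = p * (E * p) := by
    calc E * p = E * (p * p) := by rw [hp]
      _ = (E * p) * p := by rw [mul_assoc]
      _ = (p * E) * p := by rw [hE]
      _ = p * (E * p) := by rw [mul_assoc]
  intro k
  induction k with
  | zero => simp
  | succ k ih =>
    calc A ^ (k+1) * p = A ^ k * (A * p) := by rw [pow_succ, mul_assoc]
      _ = A ^ k * (p * (E * p)) := by rw [hAp, ← hkey]
      _ = (A ^ k * p) * (E * p) := by rw [mul_assoc]
      _ = (E ^ k * p) * (E * p) := by rw [ih]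
      _ = E ^ k * (p * (E * p)) := by rw [mul_assoc]
      _ = E ^ k * (E * p) := by rw [← hkey]
      _ = E ^ (k+1) * p := by rw [pow_succ, mul_assoc]

theorem my_exp_proj (A E p : 𝔸) (hp : p * p = p) (hAp : A * p = E * p)
    (hE : E * p = p * E) (u : ℝ) : exp (u • A) * p = exp (u • E) * p := by
  rw [exp_eq_tsum ℝ]
  beta_reduce
  rw [← (expSeries_summable' (𝕂 := ℝ) (u • A)).tsum_mul_right,
    ← (expSeries_summable' (𝕂 := ℝ) (u • E)).tsum_mul_right]
  refine tsum_congr fun k => ?_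
  rw [smul_mul_assoc, smul_mul_assoc, smul_pow, smul_pow, smul_mul_assoc, smul_mul_assoc,
    my_pow_proj A E p hp hAp hE k]

section CAlg

variable {𝔹 : Type*} [NormedRing 𝔹] [NormedAlgebra ℂ 𝔹] [CompleteSpace 𝔹]

theorem my_exp_scalar_nil (c : ℂ) (Nl : 𝔹) (d : ℕ) (hd : Nl ^ d = 0) (u : ℝ) :
    exp (u • (c • (1:𝔹) + Nl))
      = Complex.exp ((u:ℂ) * c) • ∑ k ∈ Finset.range d, ((u:ℂ) ^ k * ((k.factorial : ℂ))⁻¹) • Nl ^ k := by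
  letI : NormedAlgebra ℚ 𝔹 := NormedAlgebra.restrictScalars ℚ ℂ 𝔹
  have h0 : ∀ x : 𝔹, u • x = ((u:ℂ)) • x := fun x => by
    rw [← algebraMap_smul ℂ u x, Complex.coe_algebraMap]
  have hsplit : u • (c • (1:𝔹) + Nl) = ((u:ℂ) * c) • (1:𝔹) + u • Nl := by
    rw [smul_add, h0 (c • (1:𝔹)), smul_smul]
  have hcomm : Commute (((u:ℂ) * c) • (1:𝔹)) (u • Nl) :=
    ((Commute.one_left (u • Nl)).smul_left _)
  rw [hsplit, exp_add_of_commute hcomm]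
  have h1 : exp (((u:ℂ) * c) • (1:𝔹)) = Complex.exp ((u:ℂ) * c) • (1:𝔹) := by
    rw [← Algebra.algebraMap_eq_smul_one, ← map_exp (algebraMap ℂ 𝔹) (continuous_algebraMap ℂ 𝔹),
      ← Complex.exp_eq_exp_ℂ, ← Algebra.algebraMap_eq_smul_one]
  have h2 : exp (u • Nl) = ∑ k ∈ Finset.range d, ((u:ℂ) ^ k * ((k.factorial : ℂ))⁻¹) • Nl ^ k := by
    rw [exp_eq_tsum ℂ]
    beta_reduce
    rw [tsum_eq_sum (s := Finset.range d) (fun k hk => ?_)]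
    · refine Finset.sum_congr rfl fun k _ => ?_
      rw [h0 Nl, smul_pow, smul_smul, mul_comm]
    · have hdk : d ≤ k := le_of_not_gt fun h => hk (Finset.mem_range.mpr h)
      have hNk : Nl ^ k = 0 := by
        rw [← Nat.add_sub_cancel' hdk, pow_add, hd, zero_mul]
      rw [smul_pow, hNk, smul_zero, smul_zero]
  rw [h1, h2, smul_mul_assoc, one_mul]

theorem my_nil_norm (c : ℂ) (Nl p : 𝔹) (d : ℕ) (hd : Nl ^ d = 0) (u : ℝ) (hu : 0 ≤ u) :
    ‖exp (u • (c • (1:𝔹) + Nl)) * p‖ ≤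
      Real.exp (u * c.re) * ∑ k ∈ Finset.range d, u ^ k / (k.factorial : ℝ) * ‖Nl ^ k * p‖ := by
  have h1 : ‖Complex.exp ((u:ℂ) * c)‖ = Real.exp (u * c.re) := by
    rw [Complex.norm_exp]
    congr 1
    simp [Complex.mul_re]
  rw [my_exp_scalar_nil c Nl d hd u, smul_mul_assoc, norm_smul, h1]
  gcongr
  rw [Finset.sum_mul]
  refine (norm_sum_le _ _).trans (Finset.sum_le_sum fun k _ => ?_)
  rw [smul_mul_assoc, norm_smul, norm_mul, norm_pow, norm_inv, Complex.norm_real,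
    Real.norm_of_nonneg hu, Complex.norm_natCast, div_eq_mul_inv]

end CAlg

theorem my_phi_integrable (a : ℝ) (ha : a < 0) (d : ℕ) (w : ℕ → ℝ) :
    MeasureTheory.IntegrableOn
      (fun s : ℝ => Real.exp (s * a) * ∑ k ∈ Finset.range d, s ^ k / (k.factorial : ℝ) * w k)
      (Set.Ioi 0) := by
  have base : ∀ k : ℕ, MeasureTheory.IntegrableOn
      (fun s : ℝ => s ^ k * Real.exp (s * a)) (Set.Ioi 0) := by
    intro k
    have h := integrableOn_rpow_mul_exp_neg_mul_rpow (p := 1) (s := (k : ℝ)) (b := -a)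
      (by linarith [Nat.cast_nonneg (α := ℝ) k]) zero_lt_one (by linarith)
    refine h.congr_fun (fun x hx => ?_) measurableSet_Ioi
    beta_reduce
    rw [Real.rpow_one, Real.rpow_natCast]
    ring_nf
  have heq : (fun s : ℝ => Real.exp (s * a) * ∑ k ∈ Finset.range d, s ^ k / (k.factorial : ℝ) * w k)
      = fun s : ℝ => ∑ k ∈ Finset.range d, (w k / (k.factorial : ℝ)) * (s ^ k * Real.exp (s * a)) := by
    funext s
    rw [Finset.mul_sum]
    refine Finset.sum_congr rfl fun k _ => ?_
    ring
  rw [heq]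
  exact MeasureTheory.integrable_finset_sum _ fun k _ => (base k).const_mul _


end Helpers

/-- Adiabatic theorem on a decaying spectral block. -/
theorem adiabatic_decaying_block
    {n m : ℕ} (hn : 1 ≤ n) (hm : 1 ≤ m)
    (B C : Matrix (Fin n) (Fin n) ℂ)
    (b : Fin m → ℂ) (hb : Function.Injective b)
    (P N : Fin m → Matrix (Fin n) (Fin n) ℂ)
    (hPP : ∀ k l, P k * P l = if k = l then P k else 0)
    (hPsum : ∑ k, P k = 1)
    (hPN : ∀ k l, P k * N l = if k = l then N k else 0)
    (hNP : ∀ k l, N l * P k = if k = l then N k else 0)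
    (hNnil : ∀ k, IsNilpotent (N k))
    (hB : B = ∑ k, (b k • P k + N k))
    (hRe : ∀ k, (b k).re ≤ 0)
    (hsemi : ∀ k, (b k).re = 0 → N k = 0)
    (M : ℝ) (hM : 1 ≤ M)
    (hMbound : ∀ t : ℝ, 0 ≤ t → ‖exp (t • B)‖ ≤ M)
    (ℓ : Fin m) (hℓ : (b ℓ).re < 0)
    (d : ℕ) (hd : N ℓ ^ d = 0) :
    ∀ γ : ℝ, 0 < γ → ∀ t : ℝ, 0 ≤ t →
      ‖exp (t • ((γ : ℂ) • B + C)) * P ℓ - exp ((t * γ : ℂ) • B) * P ℓ‖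
        ≤ (1 / γ) * (M * ‖C‖ * Real.exp (t * (M * ‖C‖))) *
            ∫ s in Set.Ioi (0 : ℝ), Real.exp (s * (b ℓ).re) *
              ∑ k ∈ range d, s ^ k / (Nat.factorial k : ℝ) * ‖N ℓ ^ k * P ℓ‖ := by
  intro γ hγ t ht
  classical
  have hexp_eq : (exp : Matrix (Fin n) (Fin n) ℂ → Matrix (Fin n) (Fin n) ℂ) = exp :=
    rfl
  have hcoe : ∀ (r : ℝ) (X : Matrix (Fin n) (Fin n) ℂ), (r : ℂ) • X = r • X := fun r X => by
    rw [← algebraMap_smul ℂ r X, Complex.coe_algebraMap]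
  set A₁ : Matrix (Fin n) (Fin n) ℂ := γ • B with hA₁
  set A₂ : Matrix (Fin n) (Fin n) ℂ := A₁ + C with hA₂
  have hgoal1 : exp (t • ((γ : ℂ) • B + C)) = exp (t • A₂) := by
    rw [hexp_eq]
    congr 2
  have hgoal2 : exp ((t * γ : ℂ) • B) = exp (t • A₁) := by
    rw [hexp_eq]
    congr 1
    rw [hA₁, smul_smul, ← hcoe (t * γ) B, Complex.ofReal_mul]
  rw [hgoal1, hgoal2]
  -- uniform bounds
  have hMb : ∀ u : ℝ, 0 ≤ u → ‖exp (u • A₁)‖ ≤ M := by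
    intro u hu
    rw [hA₁, smul_smul, hexp_eq]
    exact hMbound _ (mul_nonneg hu hγ.le)
  have hgrow : ∀ u : ℝ, 0 ≤ u → ‖exp (u • A₂)‖ ≤ M * Real.exp (u * (M * ‖C‖)) :=
    my_growth A₁ C M hM hMb
  -- spectral projection facts
  have hPl : P ℓ * P ℓ = P ℓ := by rw [hPP ℓ ℓ, if_pos rfl]
  set E : Matrix (Fin n) (Fin n) ℂ := b ℓ • (1 : Matrix (Fin n) (Fin n) ℂ) + N ℓ with hE
  have hBP : B * P ℓ = b ℓ • P ℓ + N ℓ := by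
    have hterm : ∀ k : Fin m, (b k • P k + N k) * P ℓ
        = if k = ℓ then b ℓ • P ℓ + N ℓ else 0 := by
      intro k
      rw [add_mul, smul_mul_assoc, hPP k ℓ, hNP ℓ k]
      by_cases h : k = ℓ
      · subst h; rw [if_pos rfl, if_pos rfl, if_pos rfl]
      · rw [if_neg h, if_neg h, if_neg (fun hh => h hh.symm), smul_zero, add_zero]
    rw [hB, Finset.sum_mul]
    simp only [hterm]
    rw [Finset.sum_ite_eq' Finset.univ ℓ fun _ => b ℓ • P ℓ + N ℓ, if_pos (Finset.mem_univ ℓ)]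
  have hEP : E * P ℓ = b ℓ • P ℓ + N ℓ := by
    rw [hE, add_mul, smul_mul_assoc, one_mul, hNP ℓ ℓ, if_pos rfl]
  have hPE : P ℓ * E = b ℓ • P ℓ + N ℓ := by
    rw [hE, mul_add, mul_smul_comm, mul_one, hPN ℓ ℓ, if_pos rfl]
  -- the decay function
  set φ : ℝ → ℝ := fun u => Real.exp (u * (b ℓ).re) *
    ∑ k ∈ range d, u ^ k / (Nat.factorial k : ℝ) * ‖N ℓ ^ k * P ℓ‖ with hφ
  have hφc : Continuous φ := by
    refine (Real.continuous_exp.comp (continuous_id.mul continuous_const)).mul ?_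
    exact continuous_finset_sum _ fun k _ => ((continuous_pow k).div_const _).mul continuous_const
  have hφnn : ∀ u : ℝ, 0 ≤ u → 0 ≤ φ u := fun u hu =>
    mul_nonneg (Real.exp_pos _).le (Finset.sum_nonneg fun k _ =>
      mul_nonneg (by positivity) (norm_nonneg _))
  have hφint : MeasureTheory.IntegrableOn φ (Set.Ioi 0) := my_phi_integrable _ hℓ d _
  have hblock : ∀ s : ℝ, 0 ≤ s → ‖exp (s • A₁) * P ℓ‖ ≤ φ (γ * s) := by
    intro s hs
    rw [hA₁, smul_smul]
    erw [my_exp_proj B E (P ℓ) hPl (hBP.trans hEP.symm) (hEP.trans hPE.symm) (s * γ)]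
    rw [hE, hφ]
    have := my_nil_norm (b ℓ) (N ℓ) (P ℓ) d hd (s * γ) (mul_nonneg hs hγ.le)
    rw [mul_comm γ s]
    exact this
  -- Duhamel with projection
  have hG : Continuous fun s : ℝ => exp ((t - s) • A₂) * ((A₂ - A₁) * exp (s • A₁)) := by
    refine (exp_continuous.comp ((continuous_const.sub continuous_id).smul continuous_const)).mul ?_
    exact continuous_const.mul (exp_continuous.comp (continuous_id.smul continuous_const))
  set L : Matrix (Fin n) (Fin n) ℂ →L[ℝ] Matrix (Fin n) (Fin n) ℂ :=
    (ContinuousLinearMap.mul ℝ (Matrix (Fin n) (Fin n) ℂ)).flip (P ℓ) with hL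
  have hLa : ∀ X : Matrix (Fin n) (Fin n) ℂ, L X = X * P ℓ := fun X => rfl
  have hsplit : exp (t • A₂) * P ℓ - exp (t • A₁) * P ℓ
      = ∫ s in (0:ℝ)..t, exp ((t - s) • A₂) * ((A₂ - A₁) * exp (s • A₁)) * P ℓ := by
    rw [← hLa, ← hLa, ← L.map_sub]
    erw [my_duhamel A₁ A₂ t]
    erw [← L.intervalIntegral_comp_comm (hG.intervalIntegrable 0 t)]
    exact intervalIntegral.integral_congr fun s _ => (hLa _)
  rw [hsplit]
  set c0 : ℝ := M * ‖C‖ * Real.exp (t * (M * ‖C‖)) with hc0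
  have hc0nn : 0 ≤ c0 := by
    rw [hc0]; positivity
  have hbound : ‖∫ s in (0:ℝ)..t, exp ((t - s) • A₂) * ((A₂ - A₁) * exp (s • A₁)) * P ℓ‖
      ≤ ∫ s in (0:ℝ)..t, c0 * φ (γ * s) := by
    refine (intervalIntegral.norm_integral_le_integral_norm ht).trans ?_
    refine intervalIntegral.integral_mono_on ht ?_ ?_ ?_
    · exact ((hG.mul continuous_const).norm).intervalIntegrable 0 t
    · exact (continuous_const.mul (hφc.comp (continuous_const.mul continuous_id))).intervalIntegrable 0 t
    · intro s hs
      have hKnn : (0:ℝ) ≤ M * ‖C‖ := by positivity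
      have h1 : ‖exp ((t - s) • A₂)‖ ≤ M * Real.exp (t * (M * ‖C‖)) := by
        refine (hgrow (t - s) (by linarith [hs.2])).trans ?_
        have h1a : (t - s) * (M * ‖C‖) ≤ t * (M * ‖C‖) := by nlinarith [hs.1]
        exact mul_le_mul_of_nonneg_left (Real.exp_le_exp.mpr h1a) (by linarith)
      have h2 : ‖exp (s • A₁) * P ℓ‖ ≤ φ (γ * s) := hblock s hs.1
      have hCA : A₂ - A₁ = C := by rw [hA₂]; exact add_sub_cancel_left A₁ C
      calc ‖exp ((t - s) • A₂) * ((A₂ - A₁) * exp (s • A₁)) * P ℓ‖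
          = ‖exp ((t - s) • A₂) * ((A₂ - A₁) * (exp (s • A₁) * P ℓ))‖ := by
            rw [mul_assoc, mul_assoc]
        _ ≤ ‖exp ((t - s) • A₂)‖ * ‖(A₂ - A₁) * (exp (s • A₁) * P ℓ)‖ := norm_mul_le _ _
        _ ≤ ‖exp ((t - s) • A₂)‖ * (‖A₂ - A₁‖ * ‖exp (s • A₁) * P ℓ‖) := by
            gcongr
            exact norm_mul_le _ _
        _ ≤ (M * Real.exp (t * (M * ‖C‖))) * (‖C‖ * φ (γ * s)) := by
            rw [hCA]
            have hφγs : 0 ≤ φ (γ * s) := hφnn _ (mul_nonneg hγ.le hs.1)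
            gcongr
        _ = c0 * φ (γ * s) := by rw [hc0]; ring
  refine hbound.trans ?_
  have hIconst : (∫ s in (0:ℝ)..t, c0 * φ (γ * s)) = c0 * ∫ s in (0:ℝ)..t, φ (γ * s) :=
    intervalIntegral.integral_const_mul _ _
  have hsub : (∫ s in (0:ℝ)..t, φ (γ * s)) = γ⁻¹ * ∫ u in (0:ℝ)..(γ * t), φ u := by
    rw [intervalIntegral.integral_comp_mul_left φ hγ.ne', mul_zero, smul_eq_mul]
  have hIoc : (∫ u in (0:ℝ)..(γ * t), φ u) = ∫ u in Set.Ioc (0:ℝ) (γ * t), φ u :=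
    intervalIntegral.integral_of_le (by positivity)
  have hmono : (∫ u in Set.Ioc (0:ℝ) (γ * t), φ u) ≤ ∫ u in Set.Ioi (0:ℝ), φ u := by
    refine MeasureTheory.setIntegral_mono_set hφint ?_
      (HasSubset.Subset.eventuallyLE Set.Ioc_subset_Ioi_self)
    filter_upwards [MeasureTheory.ae_restrict_mem measurableSet_Ioi] with x hx
    exact hφnn x (le_of_lt hx)
  have hInn : (0:ℝ) ≤ ∫ u in Set.Ioi (0:ℝ), φ u :=
    MeasureTheory.setIntegral_nonneg measurableSet_Ioi fun x hx => hφnn x (le_of_lt hx)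
  calc (∫ s in (0:ℝ)..t, c0 * φ (γ * s)) = c0 * (γ⁻¹ * ∫ u in (0:ℝ)..(γ * t), φ u) := by
        rw [hIconst, hsub]
    _ ≤ c0 * (γ⁻¹ * ∫ u in Set.Ioi (0:ℝ), φ u) := by
        rw [hIoc]
        have := mul_le_mul_of_nonneg_left hmono (inv_nonneg.mpr hγ.le)
        exact mul_le_mul_of_nonneg_left this hc0nn
    _ = (1 / γ) * c0 * ∫ u in Set.Ioi (0:ℝ), φ u := by
        field_simp
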